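/- Let G be a finite simple graph that contains the wheel graph W_5 on 5 vertices as an induced subgraph. Then G is not hypersolvable (admits no hypersolvable composition series). -/
import Mathlib


open SimpleGraph

variable {V : Type}

/-- A vertex `w` is met by an edge set `S` if some edge of `S` contains it. -/
def MetBy (S : Set (Sym2 V)) (w : V) : Prop := ∃ e ∈ S, w ∈ e

/-- A containment `S ⊆ T` of edge sets of `G` is *solvable* if (a) no triangle of `G` has two
edges in `S` and one edge in `T \ S`, and (b) either `T \ S` is a single edge neither of whose
endpoints is met by `S`, or there are distinct vertices `v₁, …, v_k, v` met by `T`, with the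
`vᵢ` met by `S`, such that `S` contains all edges among the `vᵢ` and
`T \ S = {v vᵢ ∈ E : i = 1, …, k}`. -/
def SolvableStep (G : SimpleGraph V) (S T : Set (Sym2 V)) : Prop :=
  (∀ a b c : V, G.Adj a b → G.Adj a c → G.Adj b c →
      ¬(s(a, b) ∈ S ∧ s(a, c) ∈ S ∧ s(b, c) ∈ T \ S)) ∧
  ((∃ e, T \ S = {e} ∧ ∀ w, w ∈ e → ¬MetBy S w) ∨
    (∃ (k : ℕ) (vs : Fin k → V) (v : V),
      Function.Injective vs ∧ (∀ i, vs i ≠ v) ∧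
      (∀ i, MetBy S (vs i)) ∧ MetBy T v ∧
      (∀ i j, i ≠ j → s(vs i, vs j) ∈ S) ∧
      T \ S = {x | ∃ i, x = s(v, vs i) ∧ x ∈ G.edgeSet}))

/-- A graph is *hypersolvable* if its edge set admits a hypersolvable composition series:
an increasing sequence `S₀ ⊆ ⋯ ⊆ Sₙ = E` of edge sets with `|S₀| = 1` in which each
consecutive containment is solvable. -/
def Hypersolvable (G : SimpleGraph V) : Prop :=
  ∃ (n : ℕ) (S : Fin (n + 1) → Set (Sym2 V)),
    (∀ i, S i ⊆ G.edgeSet) ∧ (∃ e, S 0 = {e}) ∧ S (Fin.last n) = G.edgeSet ∧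
    ∀ i : Fin n, S i.castSucc ⊆ S i.succ ∧ SolvableStep G (S i.castSucc) (S i.succ)

/-- The wheel graph `W₅` on 5 vertices: a 4-cycle `0-1-2-3-0` together with the central
vertex `4` adjacent to all four cycle vertices. -/
def W5 : SimpleGraph (Fin 5) :=
  SimpleGraph.fromRel (fun a b => a = 4 ∨ b = 4 ∨ (b.val = (a.val + 1) % 4 ∧ a ≠ 4 ∧ b ≠ 4))

/-- A graph containing `W₅` as an induced subgraph is not hypersolvable. -/
theorem stmt13 [Fintype V] (G : SimpleGraph V) (f : Fin 5 → V)
    (hf : Function.Injective f)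
    (hind : ∀ a b : Fin 5, G.Adj (f a) (f b) ↔ W5.Adj a b) :
    ¬Hypersolvable G := by
  classical
  rintro ⟨n, S, hsub, ⟨e0, hS0⟩, hlast, hstep⟩
  set T : ℕ → Set (Sym2 V) := fun i => S ⟨min i n, by omega⟩ with hTdef
  have Tdef : ∀ (i : ℕ) (h : i ≤ n), T i = S ⟨i, by omega⟩ := by
    intro i h
    exact congrArg S (Fin.ext (by simp [Nat.min_eq_left h]))
  have Tbig : ∀ (i : ℕ), n ≤ i → T i = G.edgeSet := by
    intro i h
    have h1 : T i = S (Fin.last n) :=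
      congrArg S (Fin.ext (by simp [Nat.min_eq_right h, Fin.last]))
    rw [h1, hlast]
  have Tsub : ∀ i, T i ⊆ G.edgeSet := fun i => hsub _
  have T0 : T 0 = {e0} := by
    rw [Tdef 0 (Nat.zero_le n)]
    rw [show (⟨0, by omega⟩ : Fin (n+1)) = 0 from Fin.ext (by simp)]
    exact hS0
  -- monotonicity
  have Smono : ∀ (j : ℕ) (hj : j ≤ n) (i : ℕ) (hi : i ≤ j),
      S ⟨i, by omega⟩ ⊆ S ⟨j, by omega⟩ := by
    intro j
    induction j with
    | zero =>
      intro _ i hi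
      have : i = 0 := Nat.le_zero.1 hi
      subst this; exact subset_rfl
    | succ j ih =>
      intro hj i hi
      rcases Nat.eq_or_lt_of_le hi with rfl | hlt
      · exact subset_rfl
      · have h1 : S ⟨i, by omega⟩ ⊆ S ⟨j, by omega⟩ := ih (by omega) i (by omega)
        have h2 := (hstep ⟨j, by omega⟩).1
        exact h1.trans h2
  have Tmono : ∀ (i j : ℕ), i ≤ j → T i ⊆ T j := by
    intro i j hij
    exact Smono (min j n) (Nat.min_le_right _ _) (min i n)
      (by omega)
  have Tstep : ∀ (i : ℕ), i < n → SolvableStep G (T i) (T (i+1)) := by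
    intro i h
    rw [Tdef i (le_of_lt h), Tdef (i+1) h]
    exact (hstep ⟨i, h⟩).2
  -- first-appearance times
  set t : Sym2 V → ℕ := fun e => sInf {i | e ∈ T i} with htdef
  have htmem : ∀ e, e ∈ G.edgeSet → e ∈ T (t e) := by
    intro e he
    have hn : e ∈ T n := by rw [Tbig n le_rfl]; exact he
    exact Nat.sInf_mem (⟨n, hn⟩ : {i | e ∈ T i}.Nonempty)
  have htnot : ∀ (e : Sym2 V) (i : ℕ), i < t e → e ∉ T i := by
    intro e i hi
    exact Nat.notMem_of_lt_sInf hi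
  have htle : ∀ (e : Sym2 V) (i : ℕ), e ∈ T i → t e ≤ i := fun e i h => Nat.sInf_le h
  have tmem' : ∀ (e : Sym2 V), e ∈ G.edgeSet → ∀ i, t e ≤ i → e ∈ T i :=
    fun e he i hi => Tmono (t e) i hi (htmem e he)
  have hltn : ∀ (e : Sym2 V), e ∈ G.edgeSet → ∀ m, e ∉ T m → m < n := by
    intro e he m hm
    by_contra hc
    exact hm ((Tbig m (by omega)).symm ▸ he)
  -- graph facts
  have hAdj : ∀ p q : Fin 5, W5.Adj p q → G.Adj (f p) (f q) := fun p q h => (hind p q).2 h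
  have hEdge : ∀ p q : Fin 5, W5.Adj p q → s(f p, f q) ∈ G.edgeSet :=
    fun p q h => G.mem_edgeSet.2 (hAdj p q h)
  have hWofT : ∀ (p q : Fin 5) (i : ℕ), s(f p, f q) ∈ T i → W5.Adj p q :=
    fun p q i h => (hind p q).1 (G.mem_edgeSet.1 (Tsub i h))
  -- Lemma A : no triangle can be completed late
  have lemA : ∀ x y z : V, G.Adj x y → G.Adj x z → G.Adj y z →
      t s(x,y) < t s(y,z) → t s(x,z) < t s(y,z) → False := by
    intro x y z hxy hxz hyz h1 h2
    obtain ⟨m, hm⟩ : ∃ m, t s(y,z) = m + 1 := ⟨t s(y,z) - 1, by omega⟩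
    have hyz' : s(y,z) ∈ G.edgeSet := G.mem_edgeSet.2 hyz
    have hnot : s(y,z) ∉ T m := htnot _ _ (by omega)
    have hmn : m < n := hltn _ hyz' m hnot
    have hs := (Tstep m hmn).1 x y z hxy hxz hyz
    exact hs ⟨tmem' _ (G.mem_edgeSet.2 hxy) m (by omega),
      tmem' _ (G.mem_edgeSet.2 hxz) m (by omega),
      ⟨hm ▸ htmem _ hyz', hnot⟩⟩
  -- Lemma O : two non-adjacent rim vertices have spokes with distinct times
  have lemO : ∀ p q : Fin 5, p ≠ q → W5.Adj p 4 → W5.Adj q 4 → ¬W5.Adj p q →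
      t s(f p, f 4) = t s(f q, f 4) → False := by
    intro p q hpq hp4 hq4 hnadj heq
    have hep : s(f p, f 4) ∈ G.edgeSet := hEdge p 4 hp4
    have heq' : s(f q, f 4) ∈ G.edgeSet := hEdge q 4 hq4
    have hne : s(f p, f 4) ≠ s(f q, f 4) := by
      intro h
      rcases Sym2.eq_iff.1 h with ⟨h1, _⟩ | ⟨h1, h2⟩
      · exact hpq (hf h1)
      · exact hq4.ne (hf h2).symm
    rcases Nat.eq_zero_or_pos (t s(f p, f 4)) with h0 | hpos
    · have m1 : s(f p, f 4) ∈ T 0 := h0 ▸ htmem _ hep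
      have m2 : s(f q, f 4) ∈ T 0 := (heq ▸ h0 : t s(f q, f 4) = 0) ▸ htmem _ heq'
      rw [T0] at m1 m2
      exact hne (m1.trans m2.symm)
    · obtain ⟨m, hm⟩ : ∃ m, t s(f p, f 4) = m + 1 := ⟨t s(f p, f 4) - 1, by omega⟩
      have hnotp : s(f p, f 4) ∉ T m := htnot _ _ (by omega)
      have hnotq : s(f q, f 4) ∉ T m := htnot _ _ (by omega)
      have hmn : m < n := hltn _ hep m hnotp
      have hmemp : s(f p, f 4) ∈ T (m+1) \ T m := ⟨hm ▸ htmem _ hep, hnotp⟩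
      have hmemq : s(f q, f 4) ∈ T (m+1) \ T m := ⟨(heq ▸ hm : t s(f q, f 4) = m+1) ▸ htmem _ heq', hnotq⟩
      rcases (Tstep m hmn).2 with ⟨e, hd, _⟩ | ⟨k, vs, v, hinj, _, _, _, hclique, hd⟩
      · rw [hd] at hmemp hmemq
        exact hne (hmemp.trans hmemq.symm)
      · rw [hd] at hmemp hmemq
        obtain ⟨i₁, hi₁, _⟩ := hmemp
        obtain ⟨i₂, hi₂, _⟩ := hmemq
        rcases Sym2.eq_iff.1 hi₁ with ⟨hpv, h4v⟩ | ⟨hpv, h4v⟩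
        · rcases Sym2.eq_iff.1 hi₂ with ⟨hqv, _⟩ | ⟨_, h4v'⟩
          · exact hpq (hf (hpv.trans hqv.symm))
          · exact hp4.ne (hf (hpv.trans h4v'.symm))
        · rcases Sym2.eq_iff.1 hi₂ with ⟨hqv, _⟩ | ⟨hqv, _⟩
          · exact hq4.ne (hf (hqv.trans h4v.symm))
          · have hii : i₁ ≠ i₂ := by
              intro h
              exact hpq (hf (by rw [hpv, h, hqv]))
            have := hclique i₁ i₂ hii
            rw [← hpv, ← hqv] at this
            exact hnadj (hWofT p q m this)
  -- Lemma C : consecutive pair of spokes last, with one earlier neighboring spoke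
  have lemC : ∀ b c d : Fin 5, W5.Adj b c → W5.Adj c d → W5.Adj b 4 → W5.Adj c 4 →
      W5.Adj d 4 → t s(f b, f 4) < t s(f c, f 4) →
      t s(f c, f 4) = t s(f d, f 4) → False := by
    intro b c d hbc hcd hb4 hc4 hd4 hlt heq
    have hec : s(f c, f 4) ∈ G.edgeSet := hEdge c 4 hc4
    have hed : s(f d, f 4) ∈ G.edgeSet := hEdge d 4 hd4
    obtain ⟨m, hm⟩ : ∃ m, t s(f c, f 4) = m + 1 := ⟨t s(f c, f 4) - 1, by omega⟩
    have hnotc : s(f c, f 4) ∉ T m := htnot _ _ (by omega)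
    have hnotd : s(f d, f 4) ∉ T m := htnot _ _ (by omega)
    have hmn : m < n := hltn _ hec m hnotc
    have hmemc : s(f c, f 4) ∈ T (m+1) \ T m := ⟨hm ▸ htmem _ hec, hnotc⟩
    have hmemd : s(f d, f 4) ∈ T (m+1) \ T m :=
      ⟨(heq ▸ hm : t s(f d, f 4) = m+1) ▸ htmem _ hed, hnotd⟩
    have hnecd : s(f c, f 4) ≠ s(f d, f 4) := by
      intro h
      rcases Sym2.eq_iff.1 h with ⟨h1, _⟩ | ⟨h1, _⟩
      · exact hcd.ne (hf h1)
      · exact hc4.ne (hf h1)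
    rcases (Tstep m hmn).2 with ⟨e, hd', _⟩ | ⟨k, vs, v, hinj, _, _, _, hclique, hd'⟩
    · rw [hd'] at hmemc hmemd
      exact hnecd (hmemc.trans hmemd.symm)
    · rw [hd'] at hmemc hmemd
      obtain ⟨i₁, hi₁, _⟩ := hmemc
      obtain ⟨i₂, hi₂, _⟩ := hmemd
      -- determine v = f 4
      have hv4 : v = f 4 := by
        rcases Sym2.eq_iff.1 hi₁ with ⟨hcv, _⟩ | ⟨_, h4v⟩
        · rcases Sym2.eq_iff.1 hi₂ with ⟨hdv, _⟩ | ⟨_, h4v'⟩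
          · exact absurd (hf (hcv.trans hdv.symm)) hcd.ne
          · exact absurd (hf (hcv.trans h4v'.symm)) hc4.ne
        · exact h4v.symm
      -- the rim edge b-c
      rcases lt_trichotomy (t s(f b, f c)) (m+1) with hr | hr | hr
      · exact lemA (f b) (f c) (f 4) (hAdj b c hbc) (hAdj b 4 hb4) (hAdj c 4 hc4)
          (by omega) (by omega)
      · have hrb : s(f b, f c) ∈ G.edgeSet := hEdge b c hbc
        have hmemr : s(f b, f c) ∈ T (m+1) \ T m :=
          ⟨hr ▸ htmem _ hrb, htnot _ _ (by omega)⟩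
        rw [hd'] at hmemr
        obtain ⟨i₃, hi₃, _⟩ := hmemr
        rw [hv4] at hi₃
        rcases Sym2.eq_iff.1 hi₃ with ⟨h1, _⟩ | ⟨_, h1⟩
        · exact hb4.ne (hf h1)
        · exact hc4.ne (hf h1)
      · have e1 : s(f 4, f b) = s(f b, f 4) := Sym2.eq_swap
        have e2 : s(f 4, f c) = s(f c, f 4) := Sym2.eq_swap
        exact lemA (f 4) (f b) (f c) (hAdj 4 b hb4.symm) (hAdj 4 c hc4.symm)
          (hAdj b c hbc) (by rw [e1]; omega) (by rw [e2]; omega)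
  -- Lemma U : unique last spoke
  have lemU : ∀ b c d : Fin 5, W5.Adj b c → W5.Adj c d → W5.Adj b 4 → W5.Adj c 4 →
      W5.Adj d 4 → ¬W5.Adj b d → b ≠ d → t s(f b, f 4) < t s(f c, f 4) →
      t s(f d, f 4) < t s(f c, f 4) → False := by
    intro b c d hbc hcd hb4 hc4 hd4 hnbd hbd h1 h2
    have hec : s(f c, f 4) ∈ G.edgeSet := hEdge c 4 hc4
    obtain ⟨m, hm⟩ : ∃ m, t s(f c, f 4) = m + 1 := ⟨t s(f c, f 4) - 1, by omega⟩
    have hnotc : s(f c, f 4) ∉ T m := htnot _ _ (by omega)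
    have hmn : m < n := hltn _ hec m hnotc
    -- rim edge b-c is added exactly at step m
    have hr1 : t s(f b, f c) = m + 1 := by
      rcases lt_trichotomy (t s(f b, f c)) (m+1) with hr | hr | hr
      · exact absurd (lemA (f b) (f c) (f 4) (hAdj b c hbc) (hAdj b 4 hb4)
          (hAdj c 4 hc4) (by omega) (by omega)) (by simp)
      · exact hr
      · have e1 : s(f 4, f b) = s(f b, f 4) := Sym2.eq_swap
        have e2 : s(f 4, f c) = s(f c, f 4) := Sym2.eq_swap
        exact absurd (lemA (f 4) (f b) (f c) (hAdj 4 b hb4.symm) (hAdj 4 c hc4.symm)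
          (hAdj b c hbc) (by rw [e1]; omega) (by rw [e2]; omega)) (by simp)
    -- rim edge d-c is added exactly at step m
    have hr2 : t s(f d, f c) = m + 1 := by
      rcases lt_trichotomy (t s(f d, f c)) (m+1) with hr | hr | hr
      · exact absurd (lemA (f d) (f c) (f 4) (hAdj d c hcd.symm) (hAdj d 4 hd4)
          (hAdj c 4 hc4) (by omega) (by omega)) (by simp)
      · exact hr
      · have e1 : s(f 4, f d) = s(f d, f 4) := Sym2.eq_swap
        have e2 : s(f 4, f c) = s(f c, f 4) := Sym2.eq_swap
        exact absurd (lemA (f 4) (f d) (f c) (hAdj 4 d hd4.symm) (hAdj 4 c hc4.symm)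
          (hAdj d c hcd.symm) (by rw [e1]; omega) (by rw [e2]; omega)) (by simp)
    have heb : s(f b, f c) ∈ G.edgeSet := hEdge b c hbc
    have hed : s(f d, f c) ∈ G.edgeSet := hEdge d c hcd.symm
    have hmem1 : s(f b, f c) ∈ T (m+1) \ T m := ⟨hr1 ▸ htmem _ heb, htnot _ _ (by omega)⟩
    have hmem2 : s(f d, f c) ∈ T (m+1) \ T m := ⟨hr2 ▸ htmem _ hed, htnot _ _ (by omega)⟩
    have hne12 : s(f b, f c) ≠ s(f d, f c) := by
      intro h
      rcases Sym2.eq_iff.1 h with ⟨hh, _⟩ | ⟨_, hh⟩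
      · exact hbd (hf hh)
      · exact hcd.ne (hf hh)
    rcases (Tstep m hmn).2 with ⟨e, hd', _⟩ | ⟨k, vs, v, hinj, _, _, _, hclique, hd'⟩
    · rw [hd'] at hmem1 hmem2
      exact hne12 (hmem1.trans hmem2.symm)
    · rw [hd'] at hmem1 hmem2
      obtain ⟨i₁, hi₁, _⟩ := hmem1
      obtain ⟨i₂, hi₂, _⟩ := hmem2
      -- v = f c
      rcases Sym2.eq_iff.1 hi₁ with ⟨hbv, _⟩ | ⟨hbv, hcv⟩
      · rcases Sym2.eq_iff.1 hi₂ with ⟨hdv, _⟩ | ⟨_, hcv'⟩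
        · exact hbd (hf (hbv.trans hdv.symm))
        · exact hbc.ne (hf (hbv.trans hcv'.symm))
      · -- hbv : f b = vs i₁, hcv : f c = v
        rcases Sym2.eq_iff.1 hi₂ with ⟨hdv, _⟩ | ⟨hdv, _⟩
        · exact hcd.ne (hf (hcv.trans hdv.symm))
        · -- hdv : f d = vs i₂
          have hii : i₁ ≠ i₂ := by
            intro h
            exact hbd (hf (by rw [hbv, h, hdv]))
          have := hclique i₁ i₂ hii
          rw [← hbv, ← hdv] at this
          exact hnbd (hWofT b d m this)
  -- main local-max lemma
  have main : ∀ b c d : Fin 5, W5.Adj b c → W5.Adj c d → W5.Adj b 4 → W5.Adj c 4 →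
      W5.Adj d 4 → ¬W5.Adj b d → b ≠ d → t s(f b, f 4) ≤ t s(f c, f 4) →
      t s(f d, f 4) ≤ t s(f c, f 4) → False := by
    intro b c d hbc hcd hb4 hc4 hd4 hnbd hbd h1 h2
    rcases Nat.eq_or_lt_of_le h1 with he1 | hl1
    · rcases Nat.eq_or_lt_of_le h2 with he2 | hl2
      · exact lemO b d hbd hb4 hd4 hnbd (he1.trans he2.symm)
      · exact lemC d c b hcd.symm hbc.symm hd4 hc4 hb4 hl2 he1.symm
    · rcases Nat.eq_or_lt_of_le h2 with he2 | hl2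
      · exact lemC b c d hbc hcd hb4 hc4 hd4 hl1 he2.symm
      · exact lemU b c d hbc hcd hb4 hc4 hd4 hnbd hbd hl1 hl2
  -- conclude: some rim vertex is a local max among spoke times
  have hcases : (t s(f 3, f 4) ≤ t s(f 0, f 4) ∧ t s(f 1, f 4) ≤ t s(f 0, f 4)) ∨
      (t s(f 0, f 4) ≤ t s(f 1, f 4) ∧ t s(f 2, f 4) ≤ t s(f 1, f 4)) ∨
      (t s(f 1, f 4) ≤ t s(f 2, f 4) ∧ t s(f 3, f 4) ≤ t s(f 2, f 4)) ∨
      (t s(f 2, f 4) ≤ t s(f 3, f 4) ∧ t s(f 0, f 4) ≤ t s(f 3, f 4)) := by omega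
  have W30 : W5.Adj 3 0 := by rw [W5, SimpleGraph.fromRel_adj]; decide
  have W01 : W5.Adj 0 1 := by rw [W5, SimpleGraph.fromRel_adj]; decide
  have W12 : W5.Adj 1 2 := by rw [W5, SimpleGraph.fromRel_adj]; decide
  have W23 : W5.Adj 2 3 := by rw [W5, SimpleGraph.fromRel_adj]; decide
  have W04 : W5.Adj 0 4 := by rw [W5, SimpleGraph.fromRel_adj]; decide
  have W14 : W5.Adj 1 4 := by rw [W5, SimpleGraph.fromRel_adj]; decide
  have W24 : W5.Adj 2 4 := by rw [W5, SimpleGraph.fromRel_adj]; decide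
  have W34 : W5.Adj 3 4 := by rw [W5, SimpleGraph.fromRel_adj]; decide
  have N02 : ¬ W5.Adj 0 2 := by rw [W5, SimpleGraph.fromRel_adj]; decide
  have N13 : ¬ W5.Adj 1 3 := by rw [W5, SimpleGraph.fromRel_adj]; decide
  have N31 : ¬ W5.Adj 3 1 := fun h => N13 h.symm
  have N20 : ¬ W5.Adj 2 0 := fun h => N02 h.symm
  rcases hcases with ⟨ha, hb⟩ | ⟨ha, hb⟩ | ⟨ha, hb⟩ | ⟨ha, hb⟩
  · exact main 3 0 1 W30 W01 W34 W04 W14 N31 (by decide) ha hb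
  · exact main 0 1 2 W01 W12 W04 W14 W24 N02 (by decide) ha hb
  · exact main 1 2 3 W12 W23 W14 W24 W34 N13 (by decide) ha hb
  · exact main 2 3 0 W23 W30 W24 W34 W04 N20 (by decide) ha hb
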